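/- Let a, b, c ∈ ℝ with b > 0 and b < a < 2b (i.e. 1 < a/b < 2). Then Δ > 0 and the real roots of f₁ are exactly 0, z₁ = c/(2b) − √Δ and z₂ = c/(2b) + √Δ; they are pairwise distinct and satisfy z₁ < 0 < z₂; moreover β₂(0)β₃(0) = (a − b)(2b − a) > 0 while β₂(z₁)β₃(z₁) < 0 and β₂(z₂)β₃(z₂) < 0, i.e. the root 0 is a node lying between two saddle-type roots (Darbouxian type D₂). -/
import Mathlib


noncomputable section

/-- `Δ = (c/(2b))² − a/b + 2`. -/
def disc (a b c : ℝ) : ℝ := (c / (2 * b)) ^ 2 - a / b + 2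

/-- The cubic `f₁(z) = b z³ − c z² + (a − 2b) z`. -/
def cubicF (a b c z : ℝ) : ℝ := b * z ^ 3 - c * z ^ 2 + (a - 2 * b) * z

/-- `β₂(z) = 2b z² − c z + (a − b)`. -/
def beta2 (a b c z : ℝ) : ℝ := 2 * b * z ^ 2 - c * z + (a - b)

/-- `β₃(z) = −3b z² + 2c z + (2b − a)`. -/
def beta3 (a b c z : ℝ) : ℝ := -3 * b * z ^ 2 + 2 * c * z + (2 * b - a)

theorem stmt1 (a b c : ℝ) (hb : 0 < b) (hba : b < a) (hab : a < 2 * b) :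
    0 < disc a b c ∧
    ({z : ℝ | cubicF a b c z = 0} =
      {0, c / (2 * b) - Real.sqrt (disc a b c), c / (2 * b) + Real.sqrt (disc a b c)}) ∧
    (c / (2 * b) - Real.sqrt (disc a b c) ≠ 0 ∧
      c / (2 * b) + Real.sqrt (disc a b c) ≠ 0 ∧
      c / (2 * b) - Real.sqrt (disc a b c) ≠ c / (2 * b) + Real.sqrt (disc a b c)) ∧
    (c / (2 * b) - Real.sqrt (disc a b c) < 0 ∧
      0 < c / (2 * b) + Real.sqrt (disc a b c)) ∧
    beta2 a b c 0 * beta3 a b c 0 = (a - b) * (2 * b - a) ∧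
    0 < (a - b) * (2 * b - a) ∧
    beta2 a b c (c / (2 * b) - Real.sqrt (disc a b c)) *
      beta3 a b c (c / (2 * b) - Real.sqrt (disc a b c)) < 0 ∧
    beta2 a b c (c / (2 * b) + Real.sqrt (disc a b c)) *
      beta3 a b c (c / (2 * b) + Real.sqrt (disc a b c)) < 0 := by
  have hbne : b ≠ 0 := hb.ne'
  have hd : 0 < disc a b c := by
    have h1 : a / b < 2 := (div_lt_iff₀ hb).mpr (by linarith)
    have h2 := sq_nonneg (c / (2 * b))
    unfold disc; linarith
  set s := Real.sqrt (disc a b c) with hs_def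
  have hspos : 0 < s := Real.sqrt_pos.mpr hd
  have hs2 : s ^ 2 = (c / (2 * b)) ^ 2 - a / b + 2 := Real.sq_sqrt hd.le
  set m := c / (2 * b) with hm_def
  have hm : 2 * b * m = c := by rw [hm_def]; field_simp
  have hms : b * (m ^ 2 - s ^ 2) = a - 2 * b := by
    rw [hs2, hm_def]; field_simp; ring
  have hneg : m ^ 2 - s ^ 2 < 0 := by nlinarith
  have hz1neg : m - s < 0 := by nlinarith [sq_nonneg (m + s)]
  have hz2pos : 0 < m + s := by nlinarith
  have hq1 : b * (m - s) ^ 2 - c * (m - s) + (a - 2 * b) = 0 := by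
    linear_combination (m - s) * hm - hms
  have hq2 : b * (m + s) ^ 2 - c * (m + s) + (a - 2 * b) = 0 := by
    linear_combination (m + s) * hm - hms
  refine ⟨hd, ?_, ⟨hz1neg.ne, hz2pos.ne', by nlinarith⟩, ⟨hz1neg, hz2pos⟩,
    by simp [beta2, beta3], mul_pos (by linarith) (by linarith), ?_, ?_⟩
  · ext z
    simp only [Set.mem_setOf_eq, Set.mem_insert_iff, Set.mem_singleton_iff, cubicF]
    constructor
    · intro hz
      have hfact : b * z * (z - (m - s)) * (z - (m + s)) = 0 := by
        linear_combination hz - z ^ 2 * hm + z * hms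
      rcases mul_eq_zero.mp hfact with h | h
      · rcases mul_eq_zero.mp h with h | h
        · left; rcases mul_eq_zero.mp h with h | h
          · exact absurd h hbne
          · exact h
        · right; left; linarith [sub_eq_zero.mp h]
      · right; right; linarith [sub_eq_zero.mp h]
    · rintro (rfl | rfl | rfl)
      · ring
      · linear_combination (m - s) * hq1
      · linear_combination (m + s) * hq2
  · have h2 : beta2 a b c (m - s) = b * ((m - s) ^ 2 + 1) := by
      unfold beta2; linear_combination hq1
    have h3 : beta3 a b c (m - s) = -b * (m - s) ^ 2 + (a - 2 * b) := by
      unfold beta3; linear_combination -2 * hq1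
    rw [h2, h3]
    apply mul_neg_of_pos_of_neg
    · positivity
    · nlinarith [sq_nonneg (m - s)]
  · have h2 : beta2 a b c (m + s) = b * ((m + s) ^ 2 + 1) := by
      unfold beta2; linear_combination hq2
    have h3 : beta3 a b c (m + s) = -b * (m + s) ^ 2 + (a - 2 * b) := by
      unfold beta3; linear_combination -2 * hq2
    rw [h2, h3]
    apply mul_neg_of_pos_of_neg
    · positivity
    · nlinarith [sq_nonneg (m + s)]
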